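/- Let {X_N} be a sequence of nonnegative random variables such that Var[X_N]/E[X_N]² → 0 as N → ∞, with E[X_N] → ∞. Then E[log₂(1 + X_N)] is asymptotically equivalent to log₂(1 + E[X_N]), i.e., E[log₂(1 + X_N)]/log₂(1 + E[X_N]) → 1 as N → ∞. -/

import Mathlib

open MeasureTheory ProbabilityTheory Filter Real

lemma logb_one_add_le {x m : ℝ} (hx : 0 ≤ x) (hm : 0 < 1 + m) :
    Real.logb 2 (1 + x) ≤ Real.logb 2 (1 + m) + (x - m) / ((1 + m) * Real.log 2) := by
  have hx1 : (0:ℝ) < 1 + x := by linarith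
  have hlog : Real.log (1 + x) ≤ Real.log (1 + m) + (x - m) / (1 + m) := by
    have h := Real.log_le_sub_one_of_pos (show 0 < (1 + x) / (1 + m) by positivity)
    rw [Real.log_div hx1.ne' hm.ne'] at h
    have e : (1 + x) / (1 + m) - 1 = (x - m) / (1 + m) := by
      field_simp
      ring
    linarith [e ▸ h]
  have hl2 : (0:ℝ) < Real.log 2 := Real.log_pos (by norm_num)
  have : Real.log (1 + x) / Real.log 2
      ≤ (Real.log (1 + m) + (x - m) / (1 + m)) / Real.log 2 := by gcongr
  calc Real.logb 2 (1 + x) = Real.log (1 + x) / Real.log 2 := rfl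
    _ ≤ (Real.log (1 + m) + (x - m) / (1 + m)) / Real.log 2 := this
    _ = Real.logb 2 (1 + m) + (x - m) / ((1 + m) * Real.log 2) := by
        rw [Real.logb, add_div, div_div]

lemma key_bounds {Ω : Type*} [MeasurableSpace Ω] (μ : Measure Ω)
    [IsProbabilityMeasure μ] (X : Ω → ℝ) (hm : Measurable X)
    (hp : ∀ ω, 0 ≤ X ω) (h2 : MemLp X 2 μ)
    (hM : 2 ≤ ∫ ω, X ω ∂μ)
    (hδ : variance X μ / (∫ ω, X ω ∂μ) ^ 2 ≤ 1 / 8) :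
    (1 - 4 * (variance X μ / (∫ ω, X ω ∂μ) ^ 2))
        * (1 - 1 / Real.logb 2 (1 + ∫ ω, X ω ∂μ))
      ≤ (∫ ω, Real.logb 2 (1 + X ω) ∂μ) / Real.logb 2 (1 + ∫ ω, X ω ∂μ) ∧
    (∫ ω, Real.logb 2 (1 + X ω) ∂μ) / Real.logb 2 (1 + ∫ ω, X ω ∂μ) ≤ 1 := by
  set m : ℝ := ∫ ω, X ω ∂μ with hm_def
  set g : ℝ := Real.logb 2 (1 + m) with hg_def
  have hm0 : (0:ℝ) < m := by linarith
  have hm1 : (0:ℝ) < 1 + m := by linarith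
  have hl2 : (0:ℝ) < Real.log 2 := Real.log_pos (by norm_num)
  -- g ≥ 1
  have hg1 : 1 ≤ g := by
    have : Real.logb 2 2 ≤ Real.logb 2 (1 + m) :=
      Real.logb_le_logb_of_le one_lt_two (by norm_num) (by linarith)
    rwa [Real.logb_self_eq_one one_lt_two] at this
  have hg0 : (0:ℝ) < g := by linarith
  -- integrability of X
  have hXint : Integrable X μ := h2.integrable one_le_two
  -- integrability of logb 2 (1 + X)
  have hfmeas : Measurable fun ω => Real.logb 2 (1 + X ω) := by
    simpa [Real.logb] using ((measurable_const.add hm).log).div_const (Real.log 2)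
  have hfnn : ∀ ω, 0 ≤ Real.logb 2 (1 + X ω) := fun ω =>
    Real.logb_nonneg one_lt_two (by linarith [hp ω])
  have hfle : ∀ ω, Real.logb 2 (1 + X ω) ≤ X ω / Real.log 2 := by
    intro ω
    have h1 : (0:ℝ) < 1 + X ω := by linarith [hp ω]
    have := Real.log_le_sub_one_of_pos h1
    rw [Real.logb]
    gcongr
    linarith
  have hfint : Integrable (fun ω => Real.logb 2 (1 + X ω)) μ := by
    refine Integrable.mono' (hXint.div_const (Real.log 2)) hfmeas.aestronglyMeasurable
      (Filter.Eventually.of_forall fun ω => ?_)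
    rw [Real.norm_eq_abs, abs_of_nonneg (hfnn ω)]
    exact hfle ω
  constructor
  · -- lower bound
    set δ : ℝ := variance X μ / m ^ 2 with hδ_def
    have hδ0 : 0 ≤ δ := div_nonneg (variance_nonneg _ _) (sq_nonneg _)
    set A : Set Ω := {ω | m / 2 ≤ X ω} with hA_def
    have hAmeas : MeasurableSet A := measurableSet_le measurable_const hm
    -- Chebyshev
    have hcheb : μ {ω | m / 2 ≤ |X ω - m|} ≤ ENNReal.ofReal (4 * δ) := by
      have h := meas_ge_le_variance_div_sq (μ := μ) h2 (show (0:ℝ) < m / 2 by linarith)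
      have e : variance X μ / (m / 2) ^ 2 = 4 * δ := by
        rw [hδ_def]; field_simp; ring
      rwa [e] at h
    have hsub : Aᶜ ⊆ {ω | m / 2 ≤ |X ω - m|} := by
      intro ω hω
      simp only [hA_def, Set.mem_compl_iff, Set.mem_setOf_eq, not_le] at hω
      simp only [Set.mem_setOf_eq]
      rw [abs_sub_comm, abs_of_nonneg (by linarith)]
      linarith
    have hAc : (μ Aᶜ).toReal ≤ 4 * δ :=
      ENNReal.toReal_le_of_le_ofReal (by positivity)
        ((measure_mono hsub).trans hcheb)
    have hA : 1 - 4 * δ ≤ (μ A).toReal := by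
      have h1 : (μ A).toReal = 1 - (μ Aᶜ).toReal := by
        have := prob_compl_eq_one_sub (μ := μ) hAmeas.compl
        rw [compl_compl] at this
        rw [this, ENNReal.toReal_sub_of_le prob_le_one (by simp)]
        simp
      rw [h1]; linarith
    -- constant lower bound on A
    set c : ℝ := Real.logb 2 (1 + m / 2) with hc_def
    have hgc : g - 1 ≤ c := by
      have h1 : Real.logb 2 ((1 + m) / 2) ≤ c :=
        Real.logb_le_logb_of_le one_lt_two (by linarith) (by linarith)
      rwa [Real.logb_div hm1.ne' (by norm_num), Real.logb_self_eq_one one_lt_two] at h1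
    have hc0 : 0 ≤ c := Real.logb_nonneg one_lt_two (by linarith)
    have hint1 : c * (μ A).toReal ≤ ∫ ω in A, Real.logb 2 (1 + X ω) ∂μ := by
      refine setIntegral_ge_of_const_le_real hAmeas (measure_ne_top _ _) ?_ hfint.integrableOn
      intro ω hω
      exact Real.logb_le_logb_of_le one_lt_two (by linarith) (by
        simp only [hA_def, Set.mem_setOf_eq] at hω; linarith)
    have hint2 : (∫ ω in A, Real.logb 2 (1 + X ω) ∂μ) ≤ ∫ ω, Real.logb 2 (1 + X ω) ∂μ :=
      setIntegral_le_integral hfint (Filter.Eventually.of_forall hfnn)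
    have hmul : (g - 1) * (1 - 4 * δ) ≤ c * (μ A).toReal := by
      apply mul_le_mul hgc hA (by linarith) hc0
    have hnum : (g - 1) * (1 - 4 * δ) ≤ ∫ ω, Real.logb 2 (1 + X ω) ∂μ := by
      linarith
    have heq : (1 - 4 * δ) * (1 - 1 / g) = (g - 1) * (1 - 4 * δ) / g := by
      field_simp
    rw [heq]
    exact div_le_div_of_nonneg_right hnum hg0.le
  · -- upper bound
    rw [div_le_one hg0]
    have hpt : ∀ ω, Real.logb 2 (1 + X ω) ≤ g + (X ω - m) / ((1 + m) * Real.log 2) :=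
      fun ω => logb_one_add_le (hp ω) hm1
    have hi2 : Integrable (fun ω => (X ω - m) / ((1 + m) * Real.log 2)) μ :=
      (hXint.sub (integrable_const m)).div_const _
    have hrint : Integrable (fun ω => g + (X ω - m) / ((1 + m) * Real.log 2)) μ :=
      (integrable_const g).add hi2
    calc (∫ ω, Real.logb 2 (1 + X ω) ∂μ)
        ≤ ∫ ω, (g + (X ω - m) / ((1 + m) * Real.log 2)) ∂μ :=
          integral_mono hfint hrint hpt
      _ = g := by
          rw [integral_add (integrable_const g) hi2,
            integral_const, integral_div,
            integral_sub hXint (integrable_const m), integral_const]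
          simp [← hm_def]

theorem rate_asymptotic_equivalence {Ω : Type*} [MeasurableSpace Ω] (μ : Measure Ω)
    [IsProbabilityMeasure μ] (X : ℕ → Ω → ℝ)
    (hmeas : ∀ N, Measurable (X N))
    (hpos : ∀ N, ∀ ω, 0 ≤ X N ω)
    (hL2 : ∀ N, MemLp (X N) 2 μ)
    (hvar : Tendsto (fun N => variance (X N) μ / (∫ ω, X N ω ∂μ) ^ 2) atTop (nhds 0))
    (hmean : Tendsto (fun N => ∫ ω, X N ω ∂μ) atTop atTop) :
    Tendsto (fun N =>
      (∫ ω, Real.logb 2 (1 + X N ω) ∂μ) / Real.logb 2 (1 + ∫ ω, X N ω ∂μ))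
      atTop (nhds 1) := by
  set m : ℕ → ℝ := fun N => ∫ ω, X N ω ∂μ with hm_def
  set δ : ℕ → ℝ := fun N => variance (X N) μ / (m N) ^ 2 with hδ_def
  set g : ℕ → ℝ := fun N => Real.logb 2 (1 + m N) with hg_def
  set L : ℕ → ℝ := fun N => (1 - 4 * δ N) * (1 - 1 / g N) with hL_def
  have hgtop : Tendsto g atTop atTop :=
    (Real.tendsto_logb_atTop one_lt_two).comp (tendsto_atTop_add_const_left _ 1 hmean)
  have hLlim : Tendsto L atTop (nhds 1) := by
    have h1 : Tendsto (fun N => 1 - 4 * δ N) atTop (nhds 1) := by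
      have := (hvar.const_mul 4).const_sub 1
      simpa using this
    have h2 : Tendsto (fun N => 1 - 1 / g N) atTop (nhds 1) := by
      have := hgtop.inv_tendsto_atTop.const_sub 1
      simpa using this
    have := h1.mul h2
    rw [hL_def]
    simpa [one_div] using this
  have hev : ∀ᶠ N in atTop, 2 ≤ m N ∧ δ N ≤ 1 / 8 := by
    filter_upwards [hmean.eventually_ge_atTop 2,
      hvar.eventually_le_const (show (0:ℝ) < 1/8 by norm_num)] with N h1 h2
    exact ⟨h1, h2⟩
  refine tendsto_of_tendsto_of_tendsto_of_le_of_le' hLlim tendsto_const_nhds ?_ ?_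
  · filter_upwards [hev] with N hN
    exact (key_bounds μ (X N) (hmeas N) (hpos N) (hL2 N) hN.1 hN.2).1
  · filter_upwards [hev] with N hN
    exact (key_bounds μ (X N) (hmeas N) (hpos N) (hL2 N) hN.1 hN.2).2
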